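/- Let M be a family of weak compositions of an n-element set S into p parts (ordered p-tuples (A_1,…,A_p) of pairwise disjoint sets whose union is S), such that for each k ∈ {1,…,p} the family M_k = {A_k : A ∈ M} is an antichain. Then the sum over A ∈ M of 1/multinomial(n; |A_1|,…,|A_p|) is at most 1. -/

import Mathlib

open Finset

lemma multinomial_map {α β : Type*} (e : α ↪ β) (s : Finset α) (f : β → ℕ) :
    Nat.multinomial (s.map e) f = Nat.multinomial s (f ∘ e) := by
  simp [Nat.multinomial, Finset.sum_map, Finset.prod_map, Function.comp]

lemma multinomial_fin_succ (p : ℕ) (f : Fin (p + 1) → ℕ) :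
    Nat.multinomial Finset.univ f =
      (∑ i, f i).choose (f 0) * Nat.multinomial Finset.univ (f ∘ Fin.succ) := by
  conv_lhs => rw [Fin.univ_succ]
  rw [Nat.multinomial_cons, multinomial_map, Finset.sum_map, Fin.sum_univ_succ (f := f)]
  rfl

/-- LYM inequality for antichains of subsets of a fixed finite set `S`. -/
lemma lym_of_subset {α : Type*} [DecidableEq α] (n : ℕ) (S : Finset α) (hS : S.card = n)
    (𝒜 : Finset (Finset α)) (hsub : ∀ B ∈ 𝒜, B ⊆ S)
    (h : IsAntichain (· ⊆ ·) (𝒜 : Set (Finset α))) :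
    ∑ B ∈ 𝒜, (1 : ℚ) / (n.choose B.card) ≤ 1 := by
  classical
  set e : Finset α → Finset ↥S := fun B => B.subtype (· ∈ S) with he
  have hinj : ∀ B ∈ 𝒜, ∀ C ∈ 𝒜, e B = e C → B = C := by
    intro B hB C hC hBC
    have h1 := Finset.subtype_map_of_mem (hsub B hB)
    have h2 := Finset.subtype_map_of_mem (hsub C hC)
    rw [← h1, ← h2]
    exact congrArg _ hBC
  have hcard : ∀ B ∈ 𝒜, (e B).card = B.card := by
    intro B hB
    rw [← Finset.card_map (Function.Embedding.subtype _), Finset.subtype_map_of_mem (hsub B hB)]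
  set 𝒜' : Finset (Finset ↥S) := 𝒜.image e with h𝒜'
  have hmono : ∀ B ∈ 𝒜, ∀ C ∈ 𝒜, e B ⊆ e C → B ⊆ C := by
    intro B hB C hC hBC
    have := Finset.map_subset_map (f := Function.Embedding.subtype (· ∈ S)) |>.2 hBC
    rwa [Finset.subtype_map_of_mem (hsub B hB), Finset.subtype_map_of_mem (hsub C hC)] at this
  have hanti' : IsAntichain (· ⊆ ·) (𝒜' : Set (Finset ↥S)) := by
    intro B' hB' C' hC' hne hBC
    simp only [h𝒜', Finset.coe_image, Set.mem_image, Finset.mem_coe] at hB' hC'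
    obtain ⟨B, hB, rfl⟩ := hB'
    obtain ⟨C, hC, rfl⟩ := hC'
    exact h hB hC (fun hbc => hne (by rw [hbc])) (hmono B hB C hC hBC)
  have hn : Fintype.card ↥S = n := by rw [Fintype.card_coe, hS]
  have key := Finset.sum_card_slice_div_choose_le_one (𝕜 := ℚ) hanti'
  rw [hn] at key
  have step1 : ∑ B ∈ 𝒜, (1 : ℚ) / (n.choose B.card) = ∑ B' ∈ 𝒜', (1 : ℚ) / (n.choose B'.card) := by
    rw [h𝒜', Finset.sum_image hinj]
    exact Finset.sum_congr rfl fun B hB => by rw [hcard B hB]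
  rw [step1]
  have maps_to : ∀ B' ∈ 𝒜', B'.card ∈ Finset.range (n + 1) := by
    intro B' _
    simp only [Finset.mem_range, Nat.lt_succ_iff]
    rw [← hn]; exact Finset.card_le_univ B'
  rw [← Finset.sum_fiberwise_of_maps_to maps_to (fun B' => (1 : ℚ) / (n.choose B'.card))]
  calc ∑ r ∈ Finset.range (n + 1), ∑ B' ∈ 𝒜'.filter (fun B' => B'.card = r),
        (1 : ℚ) / (n.choose B'.card)
      = ∑ r ∈ Finset.range (n + 1), ((𝒜' # r).card : ℚ) / (n.choose r) := by
        refine Finset.sum_congr rfl fun r _ => ?_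
        have h1 : ∀ B' ∈ 𝒜'.filter (fun B' => B'.card = r),
            (1 : ℚ) / (n.choose B'.card) = 1 / (n.choose r) := fun B' hB' => by
          rw [(Finset.mem_filter.1 hB').2]
        have h2 : 𝒜' # r = 𝒜'.filter (fun B' => B'.card = r) := rfl
        rw [Finset.sum_congr rfl h1, Finset.sum_const, nsmul_eq_mul, h2, mul_one_div]
    _ ≤ 1 := key

/-- Hochberg–Hirsch LYM inequality for Meshalkin's theorem: if `M` is a family of weak
compositions of an `n`-set `S` into `p` parts and each `M_k` is an antichain, then
`∑_{A ∈ M} 1 / multinomial(n; |A_1|, …, |A_p|) ≤ 1`. -/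
theorem meshalkin_lym {α : Type*} [DecidableEq α] (n p : ℕ) (S : Finset α)
    (hS : S.card = n) (M : Finset (Fin p → Finset α))
    (hcomp : ∀ A ∈ M, (∀ i j : Fin p, i ≠ j → Disjoint (A i) (A j)) ∧
      Finset.univ.biUnion A = S)
    (hanti : ∀ k : Fin p,
      IsAntichain (· ⊆ ·) {B : Finset α | ∃ A ∈ M, A k = B}) :
    ∑ A ∈ M, (1 : ℚ) / (Nat.multinomial Finset.univ (fun i => (A i).card)) ≤ 1 := by
  classical
  induction p generalizing n S with
  | zero =>
    have hM : M.card ≤ 1 := Finset.card_le_one.mpr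
      (fun a _ b _ => funext fun i => i.elim0)
    have hone : ∀ A ∈ M, (1 : ℚ) / (Nat.multinomial Finset.univ (fun i => (A i).card)) = 1 := by
      intro A _
      simp
    rw [Finset.sum_congr rfl hone, Finset.sum_const, nsmul_eq_mul, mul_one]
    exact_mod_cast hM
  | succ p ih =>
    have hsum : ∀ A ∈ M, ∑ i, (A i).card = n := by
      intro A hA
      obtain ⟨hdisj, hun⟩ := hcomp A hA
      rw [← hS, ← hun, Finset.card_biUnion (fun i _ j _ hij => hdisj i j hij)]
    have hsubS : ∀ A ∈ M, ∀ i, A i ⊆ S := by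
      intro A hA i
      rw [← (hcomp A hA).2]
      exact Finset.subset_biUnion_of_mem A (Finset.mem_univ i)
    set T := M.image (fun A => A 0) with hT
    have regroup := Finset.sum_fiberwise_of_maps_to (g := fun A : Fin (p + 1) → Finset α => A 0) (t := T)
      (fun A hA => Finset.mem_image_of_mem _ hA)
      (fun A : Fin (p + 1) → Finset α => (1 : ℚ) / (Nat.multinomial Finset.univ (fun i => (A i).card)))
    rw [← regroup]
    have main : ∀ B ∈ T, ∑ A ∈ M.filter (fun A => A 0 = B),
        (1 : ℚ) / (Nat.multinomial Finset.univ (fun i => (A i).card))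
        ≤ (1 : ℚ) / (n.choose B.card) := by
      intro B hB
      obtain ⟨AB, hABM, hAB0⟩ := Finset.mem_image.1 hB
      have hBS : B ⊆ S := hAB0 ▸ hsubS AB hABM 0
      have hBn : B.card ≤ n := hS ▸ Finset.card_le_card hBS
      have hCpos : (0 : ℚ) < (n.choose B.card : ℚ) := by
        exact_mod_cast Nat.choose_pos hBn
      set M' := (M.filter (fun A => A 0 = B)).image (fun A => A ∘ Fin.succ) with hM'
      have htinj : ∀ A ∈ M.filter (fun A => A 0 = B), ∀ A' ∈ M.filter (fun A => A 0 = B),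
          A ∘ Fin.succ = A' ∘ Fin.succ → A = A' := by
        intro A hA A' hA' htail
        funext i
        refine Fin.cases ?_ (fun j => ?_) i
        · rw [(Finset.mem_filter.1 hA).2, (Finset.mem_filter.1 hA').2]
        · exact congrFun htail j
      have hIH : ∑ A' ∈ M', (1 : ℚ) /
          (Nat.multinomial Finset.univ (fun i => (A' i).card)) ≤ 1 := by
        refine ih (n - B.card) (S \ B) ?_ M' ?_ ?_
        · rw [Finset.card_sdiff_of_subset hBS, hS]
        · intro A' hA'
          obtain ⟨A, hA, rfl⟩ := Finset.mem_image.1 hA'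
          have hAM := (Finset.mem_filter.1 hA).1
          have hA0 : A 0 = B := (Finset.mem_filter.1 hA).2
          obtain ⟨hdisj, hun⟩ := hcomp A hAM
          refine ⟨fun i j hij => hdisj i.succ j.succ
            (fun h => hij (Fin.succ_injective _ h)), ?_⟩
          ext x
          simp only [Finset.mem_biUnion, Finset.mem_univ, true_and, Finset.mem_sdiff,
            Function.comp_apply]
          constructor
          · rintro ⟨i, hx⟩
            refine ⟨hun ▸ Finset.mem_biUnion.2 ⟨i.succ, Finset.mem_univ _, hx⟩, fun hxB => ?_⟩
            rw [← hA0] at hxB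
            exact Finset.disjoint_left.mp (hdisj i.succ 0 (Fin.succ_ne_zero i)) hx hxB
          · rintro ⟨hxS, hxB⟩
            rw [← hun] at hxS
            obtain ⟨j, -, hj⟩ := Finset.mem_biUnion.1 hxS
            refine Fin.cases ?_ (fun i hji => ?_) j hj
            · intro hx0
              exact absurd (hA0 ▸ hx0) hxB
            · exact ⟨i, hji⟩
        · intro k
          refine (hanti k.succ).subset ?_
          rintro C ⟨A', hA', rfl⟩
          obtain ⟨A, hA, rfl⟩ := Finset.mem_image.1 hA'
          exact ⟨A, (Finset.mem_filter.1 hA).1, rfl⟩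
      rw [hM', Finset.sum_image htinj] at hIH
      have hterm : ∀ A ∈ M.filter (fun A => A 0 = B),
          (1 : ℚ) / (Nat.multinomial Finset.univ (fun i => (A i).card)) =
          (1 / (n.choose B.card)) *
            (1 / (Nat.multinomial Finset.univ (fun i => ((A ∘ Fin.succ) i).card))) := by
        intro A hA
        have hAM := (Finset.mem_filter.1 hA).1
        have hA0 : A 0 = B := (Finset.mem_filter.1 hA).2
        have := multinomial_fin_succ p (fun i => (A i).card)
        rw [hsum A hAM, hA0] at this
        rw [this, one_div_mul_one_div]
        push_cast
        rfl
      rw [Finset.sum_congr rfl hterm, ← Finset.mul_sum]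
      refine le_trans (mul_le_mul_of_nonneg_left hIH (by positivity)) ?_
      rw [mul_one]
    refine (Finset.sum_le_sum main).trans ?_
    refine lym_of_subset n S hS T ?_ ?_
    · intro B hB
      obtain ⟨A, hA, rfl⟩ := Finset.mem_image.1 hB
      exact hsubS A hA 0
    · refine (hanti 0).subset ?_
      rintro C hC
      obtain ⟨A, hA, rfl⟩ := Finset.mem_image.1 hC
      exact ⟨A, hA, rfl⟩
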